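/- arXiv:2005.00855 — 5 statements merged into one kernel-verified Lean document; each statement's English description precedes it below -/
import Mathlib

section
/- Let a ∈ X and let P ∈ ℚ⟨X⟩ be a polynomial whose coefficient of the word a^k is zero for every k ≥ 0. If [ι a, P] = 0 (i.e., ι a · P = P · ι a), then P = 0. -/
/-!
Setting: `ℚ⟨X⟩ = FreeAlgebra ℚ X`, the free associative `ℚ`-algebra on a type `X` of
non-commuting variables, with the commutator bracket `⁅P,Q⁆ = P*Q - Q*P` and canonical
inclusion `ι = FreeAlgebra.ι ℚ`.  The words (elements of `FreeMonoid X`) form a `ℚ`-basis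
`FreeAlgebra.basisFreeMonoid ℚ X` of `ℚ⟨X⟩`.
-/

/-- The right-normed bracketing of a word:
`[ι x₁,[ι x₂,[…,[ι x_{n−1}, ι xₙ]…]]]`, with the empty word mapped to `0`. -/
noncomputable def rword {X : Type*} : List X → FreeAlgebra ℚ X
  | [] => 0
  | [x] => FreeAlgebra.ι ℚ x
  | x :: y :: ys => ⁅FreeAlgebra.ι ℚ x, rword (y :: ys)⁆

/-- The right-normed bracketing map `r : ℚ⟨X⟩ → ℚ⟨X⟩`: the unique `ℚ`-linear map sending the
basis word `w₁w₂⋯wₙ` to `[ι w₁,[ι w₂,[…,[ι w_{n−1}, ι wₙ]…]]]` (and the empty word `1` to `0`,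
and a single letter `x` to `ι x`). -/
noncomputable def rmap (X : Type*) : FreeAlgebra ℚ X →ₗ[ℚ] FreeAlgebra ℚ X :=
  (FreeAlgebra.basisFreeMonoid ℚ X).constr ℚ fun w => rword w.toList

/-- The coefficient of the word `w` in `P`, with respect to the basis of words of `ℚ⟨X⟩`. -/
noncomputable def coeffWord {X : Type*} (P : FreeAlgebra ℚ X) (w : FreeMonoid X) : ℚ :=
  (FreeAlgebra.basisFreeMonoid ℚ X).repr P w

section

attribute [local instance 100] LieRing.ofAssociativeRing

/-- `P` is a Lie polynomial: it belongs to the Lie subalgebra of `ℚ⟨X⟩` (under the commutator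
bracket) generated by the image of `ι`, i.e. the smallest `ℚ`-subspace of `ℚ⟨X⟩` containing
`ι(X)` and closed under commutators. -/
def IsLiePolynomial {X : Type*} (P : FreeAlgebra ℚ X) : Prop :=
  P ∈ LieSubalgebra.lieSpan ℚ (FreeAlgebra ℚ X) (Set.range (FreeAlgebra.ι ℚ))

end

/-- `P` is homogeneous of degree `n`: a `ℚ`-linear combination of words of length `n`. -/
def IsHomogeneous {X : Type*} (n : ℕ) (P : FreeAlgebra ℚ X) : Prop :=
  P ∈ Submodule.span ℚ
    ((fun w : List X => (w.map (FreeAlgebra.ι ℚ)).prod) '' {w : List X | w.length = n})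

private lemma freemonoid_mul_toList {X : Type*} (u v : FreeMonoid X) :
    (u * v).toList = u.toList ++ v.toList := rfl

/-- If the coefficient of `a^k` in `P` vanishes for every `k ≥ 0` and `[ι a, P] = 0`,
then `P = 0`. -/
theorem stmt_0 {X : Type*} (a : X) (P : FreeAlgebra ℚ X)
    (hP : ∀ k : ℕ, coeffWord P (FreeMonoid.ofList (List.replicate k a)) = 0)
    (h : ⁅FreeAlgebra.ι ℚ a, P⁆ = 0) :
    P = 0 := by
  have hP : ∀ k : ℕ, (FreeAlgebra.basisFreeMonoid ℚ X).repr P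
      (FreeMonoid.ofList (List.replicate k a)) = 0 := hP
  classical
  set e := FreeAlgebra.equivMonoidAlgebraFreeMonoid (R := ℚ) (X := X) with he
  set f : MonoidAlgebra ℚ (FreeMonoid X) := e P with hf
  -- coefficients
  have hcoeff : ∀ w : FreeMonoid X, (FreeAlgebra.basisFreeMonoid ℚ X).repr P w = f.coeff w := by
    intro w
    simp [FreeAlgebra.basisFreeMonoid, hf, he]
  have hea : e (FreeAlgebra.ι ℚ a) = MonoidAlgebra.single (FreeMonoid.of a) (1:ℚ) := by
    simp [he, FreeAlgebra.equivMonoidAlgebraFreeMonoid]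
  have hcomm : ∀ w : FreeMonoid X,
      (MonoidAlgebra.single (FreeMonoid.of a) (1:ℚ) * f).coeff w
        = (f * MonoidAlgebra.single (FreeMonoid.of a) (1:ℚ)).coeff w := by
    intro w
    have h' : FreeAlgebra.ι ℚ a * P = P * FreeAlgebra.ι ℚ a := by
      have := sub_eq_zero.mp h
      simpa [Ring.lie_def] using sub_eq_zero.mp h
    have := congrArg e h'
    rw [map_mul, map_mul, hea, ← hf] at this
    rw [this]
  -- Fact 1
  have fact1 : ∀ l : List X,
      (MonoidAlgebra.single (FreeMonoid.of a) (1:ℚ) * f).coeff (FreeMonoid.ofList (a :: l))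
        = f.coeff (FreeMonoid.ofList l) := by
    intro l
    rw [MonoidAlgebra.single_mul_apply_aux (m₂ := FreeMonoid.ofList l), one_mul]
    intro u _
    constructor
    · intro hu
      have := congrArg FreeMonoid.toList hu
      simp only [freemonoid_mul_toList] at this
      apply FreeMonoid.toList.injective
      simpa using this
    · rintro rfl; rfl
  -- Fact 2
  have fact2 : ∀ l : List X,
      (f * MonoidAlgebra.single (FreeMonoid.of a) (1:ℚ)).coeff (FreeMonoid.ofList (l ++ [a]))
        = f.coeff (FreeMonoid.ofList l) := by
    intro l
    rw [MonoidAlgebra.mul_single_apply_aux (m₂ := FreeMonoid.ofList l), mul_one]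
    intro u _
    constructor
    · intro hu
      have := congrArg FreeMonoid.toList hu
      simp only [freemonoid_mul_toList] at this
      apply FreeMonoid.toList.injective
      simpa using this
    · rintro rfl; rfl
  -- Fact 3
  have fact3 : ∀ l : List X, l.getLast? ≠ some a →
      (f * MonoidAlgebra.single (FreeMonoid.of a) (1:ℚ)).coeff (FreeMonoid.ofList l) = 0 := by
    intro l hl
    apply MonoidAlgebra.mul_single_apply_of_not_exists_mul
    rintro ⟨d, hd⟩
    apply hl
    have := congrArg FreeMonoid.toList hd
    simp only [freemonoid_mul_toList] at this
    rw [show FreeMonoid.toList (FreeMonoid.ofList l) = l from rfl] at this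
    rw [this]
    exact List.getLast?_concat
  -- key identity
  have key : ∀ l : List X,
      f.coeff (FreeMonoid.ofList l)
        = (f * MonoidAlgebra.single (FreeMonoid.of a) (1:ℚ)).coeff (FreeMonoid.ofList (a :: l)) := by
    intro l
    rw [← hcomm, fact1]
  -- B: nonempty words not ending in a have zero coefficient
  have factB : ∀ l : List X, l ≠ [] → l.getLast? ≠ some a → f.coeff (FreeMonoid.ofList l) = 0 := by
    intro l hne hl
    rw [key l, fact3]
    cases l with
    | nil => exact absurd rfl hne
    | cons x t => rw [List.getLast?_cons_cons]; exact hl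
  -- C: rotate a trailing a to the front
  have factC : ∀ l : List X,
      f.coeff (FreeMonoid.ofList (l ++ [a])) = f.coeff (FreeMonoid.ofList (a :: l)) := by
    intro l
    rw [key (l ++ [a]), show a :: (l ++ [a]) = (a :: l) ++ [a] from rfl, fact2]
  -- D: move all trailing a's to the front
  have factD : ∀ (k : ℕ) (m : List X),
      f.coeff (FreeMonoid.ofList (m ++ List.replicate k a))
        = f.coeff (FreeMonoid.ofList (List.replicate k a ++ m)) := by
    intro k
    induction k with
    | zero => intro m; simp
    | succ k ih =>
      intro m
      have h1 : m ++ List.replicate (k+1) a = (m ++ List.replicate k a) ++ [a] := by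
        rw [List.replicate_succ' (n := k) (a := a), List.append_assoc]
      rw [h1, factC, show a :: (m ++ List.replicate k a) = (a :: m) ++ List.replicate k a
        from rfl, ih (a :: m)]
      congr 1
      show List.replicate k a ++ a :: m = List.replicate (k+1) a ++ m
      rw [List.replicate_succ' (n := k) (a := a), List.append_assoc]
      rfl
  -- decomposition of an arbitrary word
  have decomp : ∀ l : List X, ∃ m k, l = m ++ List.replicate k a ∧ m.getLast? ≠ some a := by
    intro l
    induction l using List.reverseRecOn with
    | nil => exact ⟨[], 0, by simp, by simp⟩
    | append_singleton l x ih =>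
      obtain ⟨m, k, rfl, hm⟩ := ih
      by_cases hx : x = a
      · refine ⟨m, k + 1, ?_, hm⟩
        rw [hx, List.replicate_succ' (n := k) (a := a), ← List.append_assoc]
      · exact ⟨m ++ List.replicate k a ++ [x], 0, by simp,
          by rw [List.getLast?_concat]; simpa using hx⟩
  -- conclude
  have hfz : f = 0 := by
    ext w
    obtain ⟨m, k, hw, hm⟩ := decomp w.toList
    have hwl : w = FreeMonoid.ofList (m ++ List.replicate k a) := by
      apply FreeMonoid.toList.injective; exact hw
    rcases eq_or_ne m [] with rfl | hne
    · have := hP k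
      rw [hcoeff] at this
      simpa [hwl] using this
    · have h0 : f.coeff (FreeMonoid.ofList (List.replicate k a ++ m)) = 0 := by
        apply factB
        · simp [hne]
        · rw [List.getLast?_append]
          cases hml : m.getLast? with
          | none => exact absurd (List.getLast?_eq_none_iff.mp hml) hne
          | some b =>
            simp only [Option.some_or]
            rw [hml] at hm
            simpa using hm
      rw [hwl, factD]
      simpa using h0
  have : e P = 0 := by rw [← hf, hfz]
  simpa using e.injective (by simpa using this)
end

section
/- Let a ∈ X and let P ∈ ℚ⟨X⟩ be a polynomial whose coefficient of the word a^k is zero for every k ≥ 0. If the commutator [ι a, P] is a Lie polynomial, then P itself is a Lie polynomial. -/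
attribute [local instance 100] LieRing.ofAssociativeRing

namespace StmtAux

variable {X : Type*}

local notation "A" => FreeAlgebra ℚ X
local notation "BB" => FreeAlgebra.basisFreeMonoid ℚ X
local notation "ιQ" => FreeAlgebra.ι ℚ
local notation "LL" => LieSubalgebra.lieSpan ℚ (FreeAlgebra ℚ X) (Set.range (FreeAlgebra.ι ℚ))

lemma basis_apply (w : FreeMonoid X) : BB w = (w.toList.map ιQ).prod := by
  simp only [FreeAlgebra.basisFreeMonoid, Module.Basis.map_apply, Finsupp.coe_basisSingleOne]
  rw [LinearEquiv.symm_trans_apply]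
  rw [show (MonoidAlgebra.coeffLinearEquiv ℚ).symm (Finsupp.single w (1:ℚ)) = MonoidAlgebra.of ℚ (FreeMonoid X) w from rfl]
  simp only [AlgEquiv.toLinearEquiv_apply, FreeAlgebra.equivMonoidAlgebraFreeMonoid,
    AlgEquiv.ofAlgHom_symm_apply]
  erw [MonoidAlgebra.lift_of]
  exact FreeMonoid.lift_apply (ιQ) w

lemma basis_mul (u v : FreeMonoid X) : BB u * BB v = BB (u * v) := by
  simp [basis_apply]

lemma ι_eq_basis (x : X) : ιQ x = BB (FreeMonoid.of x) := by
  simp [basis_apply]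

lemma basis_one : BB (1 : FreeMonoid X) = 1 := by
  simp [basis_apply]

lemma coeffWord_zero (w : FreeMonoid X) : coeffWord (0 : A) w = 0 := by simp [coeffWord]

lemma coeffWord_add (P Q : A) (w : FreeMonoid X) :
    coeffWord (P + Q) w = coeffWord P w + coeffWord Q w := by simp [coeffWord]

lemma coeffWord_smul (c : ℚ) (P : A) (w : FreeMonoid X) :
    coeffWord (c • P) w = c * coeffWord P w := by simp [coeffWord]

lemma coeffWord_sub (P Q : A) (w : FreeMonoid X) :
    coeffWord (P - Q) w = coeffWord P w - coeffWord Q w := by simp [coeffWord]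

/-- homogeneous span in terms of the basis -/
lemma isHomogeneous_iff {n : ℕ} {P : A} :
    IsHomogeneous n P ↔ P ∈ Submodule.span ℚ (BB '' {w : FreeMonoid X | w.toList.length = n}) := by
  have : ((fun w : List X => (w.map ιQ).prod) '' {w : List X | w.length = n})
      = (BB '' {w : FreeMonoid X | w.toList.length = n}) := by
    ext z
    constructor
    · rintro ⟨l, hl, rfl⟩
      exact ⟨FreeMonoid.ofList l, by simpa using hl, by rw [basis_apply]; rfl⟩
    · rintro ⟨w, hw, rfl⟩
      exact ⟨w.toList, hw, (basis_apply w).symm⟩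
  rw [IsHomogeneous, this]

lemma homog_zero (n : ℕ) : IsHomogeneous n (0 : A) := Submodule.zero_mem _

lemma homog_add {n : ℕ} {P Q : A} (h1 : IsHomogeneous n P) (h2 : IsHomogeneous n Q) :
    IsHomogeneous n (P + Q) := Submodule.add_mem _ h1 h2

lemma homog_sub {n : ℕ} {P Q : A} (h1 : IsHomogeneous n P) (h2 : IsHomogeneous n Q) :
    IsHomogeneous n (P - Q) := Submodule.sub_mem _ h1 h2

lemma homog_smul {n : ℕ} {c : ℚ} {P : A} (h1 : IsHomogeneous n P) :
    IsHomogeneous n (c • P) := Submodule.smul_mem _ _ h1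

lemma homog_ι (x : X) : IsHomogeneous 1 (ιQ x : A) :=
  Submodule.subset_span ⟨[x], by simp, by simp⟩

lemma homog_mul {m n : ℕ} {P Q : A} (h1 : IsHomogeneous m P) (h2 : IsHomogeneous n Q) :
    IsHomogeneous (m + n) (P * Q) := by
  induction h1 using Submodule.span_induction with
  | mem p hp =>
    obtain ⟨u, hu, rfl⟩ := hp
    induction h2 using Submodule.span_induction with
    | mem q hq =>
      obtain ⟨v, hv, rfl⟩ := hq
      refine Submodule.subset_span ⟨u ++ v, ?_, ?_⟩
      · simp [Set.mem_setOf_eq] at hu hv ⊢; omega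
      · simp
    | zero => simpa using homog_zero _
    | add q₁ q₂ _ _ ih1 ih2 => rw [mul_add]; exact homog_add ih1 ih2
    | smul c q _ ih => rw [mul_smul_comm]; exact homog_smul ih
  | zero => simpa using homog_zero _
  | add p₁ p₂ _ _ ih1 ih2 => rw [add_mul]; exact homog_add ih1 ih2
  | smul c p _ ih => rw [smul_mul_assoc]; exact homog_smul ih

lemma homog_lie {m n : ℕ} {P Q : A} (h1 : IsHomogeneous m P) (h2 : IsHomogeneous n Q) :
    IsHomogeneous (m + n) ⁅P, Q⁆ := by
  rw [Ring.lie_def]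
  refine homog_sub (homog_mul h1 h2) ?_
  have := homog_mul h2 h1
  rwa [Nat.add_comm] at this

/-! ### the homogeneous projections -/

noncomputable def proj (n : ℕ) : A →ₗ[ℚ] A :=
  (FreeAlgebra.basisFreeMonoid ℚ X).constr ℚ fun w => if w.toList.length = n then BB w else 0

lemma proj_basis (n : ℕ) (w : FreeMonoid X) :
    proj n (BB w) = if w.toList.length = n then BB w else 0 :=
  Module.Basis.constr_basis _ _ _ _

open Classical in
lemma coeffWord_basis (u w : FreeMonoid X) :
    coeffWord (BB u : A) w = if u = w then 1 else 0 := by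
  rw [coeffWord, Module.Basis.repr_self, Finsupp.single_apply]

open Classical in
lemma coeffWord_proj (n : ℕ) (P : A) (w : FreeMonoid X) :
    coeffWord (proj n P) w = if w.toList.length = n then coeffWord P w else 0 := by
  have : ∀ Q ∈ Submodule.span ℚ (Set.range (BB : FreeMonoid X → A)),
      coeffWord (proj n Q) w = if w.toList.length = n then coeffWord Q w else 0 := by
    intro Q hQ
    induction hQ using Submodule.span_induction with
    | mem q hq =>
      obtain ⟨u, rfl⟩ := hq
      rw [proj_basis]
      split_ifs with h1 h2 h2
      · rfl
      · rw [coeffWord_basis, if_neg (fun h : u = w => h2 (by rw [← h]; exact h1))]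
      · rw [coeffWord_basis, if_neg (fun h : u = w => h1 (by rw [h]; exact h2)), coeffWord_zero]
      · exact coeffWord_zero w
    | zero => rw [map_zero, coeffWord_zero]; split <;> simp [coeffWord_zero]
    | add q₁ q₂ _ _ ih1 ih2 =>
      rw [map_add, coeffWord_add, ih1, ih2, coeffWord_add]; split <;> simp
    | smul c q _ ih =>
      rw [map_smul, coeffWord_smul, ih, coeffWord_smul]; split <;> simp
  exact this P (by rw [Module.Basis.span_eq]; trivial)

lemma eq_of_coeffWord_eq {P Q : A} (h : ∀ w, coeffWord P w = coeffWord Q w) : P = Q := by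
  apply (FreeAlgebra.basisFreeMonoid ℚ X).repr.injective
  ext w
  exact h w

lemma proj_homog (n : ℕ) (P : A) : IsHomogeneous n (proj n P) := by
  rw [isHomogeneous_iff, proj, Module.Basis.constr_apply]
  refine Submodule.sum_mem _ fun w _ => Submodule.smul_mem _ _ ?_
  by_cases hw : w.toList.length = n
  · rw [if_pos hw]; exact Submodule.subset_span ⟨w, hw, rfl⟩
  · rw [if_neg hw]; exact Submodule.zero_mem _

lemma coeffWord_eq_zero_of_homog {n : ℕ} {P : A} (h : IsHomogeneous n P) {w : FreeMonoid X}
    (hw : w.toList.length ≠ n) : coeffWord P w = 0 := by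
  rw [isHomogeneous_iff] at h
  induction h using Submodule.span_induction with
  | mem q hq =>
    obtain ⟨u, hu, rfl⟩ := hq
    rw [coeffWord_basis, if_neg (by rintro rfl; exact hw hu)]
  | zero => exact coeffWord_zero w
  | add q₁ q₂ _ _ ih1 ih2 => rw [coeffWord_add, ih1, ih2, add_zero]
  | smul c q _ ih => rw [coeffWord_smul, ih, mul_zero]

lemma proj_of_homog {n : ℕ} {P : A} (h : IsHomogeneous n P) : proj n P = P := by
  apply eq_of_coeffWord_eq
  intro w
  rw [coeffWord_proj]
  by_cases hw : w.toList.length = n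
  · rw [if_pos hw]
  · rw [if_neg hw, coeffWord_eq_zero_of_homog h hw]

lemma proj_of_homog_ne {m n : ℕ} {P : A} (h : IsHomogeneous n P) (hmn : m ≠ n) :
    proj m P = 0 := by
  apply eq_of_coeffWord_eq
  intro w
  rw [coeffWord_proj]
  by_cases hw : w.toList.length = m
  · rw [if_pos hw, coeffWord_eq_zero_of_homog h (by omega), coeffWord_zero]
  · rw [if_neg hw, coeffWord_zero]

lemma sum_proj (P : A) : ∃ N : ℕ, P = ∑ n ∈ Finset.range N, proj n P := by
  classical
  refine ⟨(((FreeAlgebra.basisFreeMonoid ℚ X).repr P).support.sup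
    fun w => w.toList.length) + 1, ?_⟩
  apply eq_of_coeffWord_eq
  intro w
  rw [show coeffWord (∑ n ∈ Finset.range _, proj n P) w
      = ∑ n ∈ Finset.range _, coeffWord (proj n P) w by
    simp only [coeffWord, map_sum]; rw [Finsupp.finset_sum_apply]]
  simp only [coeffWord_proj]
  rw [Finset.sum_ite_eq (Finset.range _) w.toList.length fun _ => coeffWord P w]
  by_cases hw : coeffWord P w = 0
  · rw [hw]; simp
  · rw [if_pos]
    rw [Finset.mem_range, Nat.lt_add_one_iff]
    exact Finset.le_sup (f := fun w : FreeMonoid X => w.toList.length)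
      (Finsupp.mem_support_iff.mpr hw)

lemma proj_ι_mul (x : X) (n : ℕ) (P : A) :
    proj (n + 1) (ιQ x * P) = ιQ x * proj n P := by
  have : ∀ Q ∈ Submodule.span ℚ (Set.range (BB : FreeMonoid X → A)),
      proj (n + 1) (ιQ x * Q) = ιQ x * proj n Q := by
    intro Q hQ
    induction hQ using Submodule.span_induction with
    | mem q hq =>
      obtain ⟨u, rfl⟩ := hq
      rw [ι_eq_basis, basis_mul, proj_basis, proj_basis]
      have : (FreeMonoid.of x * u).toList.length = u.toList.length + 1 := by
        simp [FreeMonoid.toList_mul]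
      rw [this]
      by_cases hu : u.toList.length = n
      · rw [if_pos (by omega), if_pos hu, basis_mul]
      · rw [if_neg (by omega), if_neg hu, mul_zero]
    | zero => simp
    | add q₁ q₂ _ _ ih1 ih2 => simp only [mul_add, map_add, ih1, ih2]
    | smul c q _ ih => simp only [mul_smul_comm, map_smul, ih]
  exact this P (by rw [Module.Basis.span_eq]; trivial)

lemma proj_mul_ι (x : X) (n : ℕ) (P : A) :
    proj (n + 1) (P * ιQ x) = proj n P * ιQ x := by
  have : ∀ Q ∈ Submodule.span ℚ (Set.range (BB : FreeMonoid X → A)),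
      proj (n + 1) (Q * ιQ x) = proj n Q * ιQ x := by
    intro Q hQ
    induction hQ using Submodule.span_induction with
    | mem q hq =>
      obtain ⟨u, rfl⟩ := hq
      rw [ι_eq_basis, basis_mul, proj_basis, proj_basis]
      have : (u * FreeMonoid.of x).toList.length = u.toList.length + 1 := by
        simp [FreeMonoid.toList_mul]
      rw [this]
      by_cases hu : u.toList.length = n
      · rw [if_pos (by omega), if_pos hu, basis_mul]
      · rw [if_neg (by omega), if_neg hu, zero_mul]
    | zero => simp
    | add q₁ q₂ _ _ ih1 ih2 => simp only [add_mul, map_add, ih1, ih2]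
    | smul c q _ ih => simp only [smul_mul_assoc, map_smul, ih]
  exact this P (by rw [Module.Basis.span_eq]; trivial)

lemma proj_lie_bracket (x : X) (n : ℕ) (P : A) :
    proj (n + 1) ⁅ιQ x, P⁆ = ⁅ιQ x, proj n P⁆ := by
  rw [Ring.lie_def, Ring.lie_def, map_sub, proj_ι_mul, proj_mul_ι]

/-! ### Lie monomials and the span description of the Lie span -/

inductive IsLieMon : FreeAlgebra ℚ X → Prop
  | unit (x : X) : IsLieMon (FreeAlgebra.ι ℚ x)
  | br {p q : FreeAlgebra ℚ X} : IsLieMon p → IsLieMon q → IsLieMon ⁅p, q⁆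

lemma lieMon_mem_lieSpan {P : A} (h : IsLieMon P) : P ∈ LL := by
  induction h with
  | unit x => exact LieSubalgebra.subset_lieSpan ⟨x, rfl⟩
  | br hp hq ihp ihq => exact LieSubalgebra.lie_mem _ ihp ihq

lemma span_lieMon_lie_closed {P Q : A}
    (hP : P ∈ Submodule.span ℚ {R : A | IsLieMon R})
    (hQ : Q ∈ Submodule.span ℚ {R : A | IsLieMon R}) :
    ⁅P, Q⁆ ∈ Submodule.span ℚ {R : A | IsLieMon R} := by
  induction hP using Submodule.span_induction with
  | mem p hp =>
    induction hQ using Submodule.span_induction with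
    | mem q hq => exact Submodule.subset_span (IsLieMon.br hp hq)
    | zero => rw [lie_zero]; exact Submodule.zero_mem _
    | add q₁ q₂ _ _ ih1 ih2 => rw [lie_add]; exact Submodule.add_mem _ ih1 ih2
    | smul c q _ ih => rw [lie_smul]; exact Submodule.smul_mem _ _ ih
  | zero => rw [zero_lie]; exact Submodule.zero_mem _
  | add p₁ p₂ _ _ ih1 ih2 => rw [add_lie]; exact Submodule.add_mem _ ih1 ih2
  | smul c p _ ih => rw [smul_lie]; exact Submodule.smul_mem _ _ ih

lemma isLiePoly_iff_span {P : A} :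
    IsLiePolynomial P ↔ P ∈ Submodule.span ℚ {R : A | IsLieMon R} := by
  constructor
  · intro h
    let S : LieSubalgebra ℚ A :=
      { toSubmodule := Submodule.span ℚ {R : A | IsLieMon R}
        lie_mem' := fun ha hb => span_lieMon_lie_closed ha hb }
    have hle : LieSubalgebra.lieSpan ℚ A (Set.range (ιQ)) ≤ S := by
      apply LieSubalgebra.lieSpan_le.mpr
      rintro _ ⟨x, rfl⟩
      exact Submodule.subset_span (IsLieMon.unit x)
    exact hle h
  · intro h
    induction h using Submodule.span_induction with
    | mem p hp => exact lieMon_mem_lieSpan hp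
    | zero => exact (LieSubalgebra.lieSpan ℚ A _).zero_mem
    | add p₁ p₂ _ _ ih1 ih2 => exact (LieSubalgebra.lieSpan ℚ A _).add_mem ih1 ih2
    | smul c p _ ih => exact (LieSubalgebra.lieSpan ℚ A _).smul_mem c ih

/-! ### the algebra morphism ρ sending a word to the composite of adjoints -/

noncomputable def rho : FreeAlgebra ℚ X →ₐ[ℚ] Module.End ℚ (FreeAlgebra ℚ X) :=
  FreeAlgebra.lift ℚ fun x => LieAlgebra.ad ℚ (FreeAlgebra ℚ X) (FreeAlgebra.ι ℚ x)

lemma rho_ι (x : X) (Q : A) : rho (ιQ x) Q = ⁅ιQ x, Q⁆ := by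
  rw [rho, FreeAlgebra.lift_ι_apply]; rfl

lemma rho_eq_ad {Q : A} (hQ : IsLiePolynomial Q) (R : A) : rho Q R = ⁅Q, R⁆ := by
  let S : LieSubalgebra ℚ A :=
    { toSubmodule := LinearMap.eqLocus (rho.toLinearMap)
        ((LieAlgebra.ad ℚ (FreeAlgebra ℚ X)).toLinearMap)
      lie_mem' := by
        intro p q hp hq
        have hp' : rho p = LieAlgebra.ad ℚ A p := hp
        have hq' : rho q = LieAlgebra.ad ℚ A q := hq
        show rho ⁅p, q⁆ = LieAlgebra.ad ℚ A ⁅p, q⁆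
        rw [Ring.lie_def, map_sub, map_mul, map_mul, hp', hq']
        have h2 : (LieAlgebra.ad ℚ A) (p * q - q * p)
            = ⁅(LieAlgebra.ad ℚ A) p, (LieAlgebra.ad ℚ A) q⁆ := by
          rw [← Ring.lie_def, LieHom.map_lie]
        rw [Ring.lie_def] at h2
        rw [h2] }
  have hle : LieSubalgebra.lieSpan ℚ A (Set.range (ιQ)) ≤ S := by
    apply LieSubalgebra.lieSpan_le.mpr
    rintro _ ⟨x, rfl⟩
    show rho (ιQ x) = LieAlgebra.ad ℚ A (ιQ x)
    rw [rho, FreeAlgebra.lift_ι_apply]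
  have : rho Q = LieAlgebra.ad ℚ A Q := hle hQ
  rw [this]; rfl

lemma rho_preserves (P : A) {Q : A} (hQ : IsLiePolynomial Q) : IsLiePolynomial (rho P Q) := by
  induction P using FreeAlgebra.induction generalizing Q with
  | grade0 r =>
    rw [AlgHom.commutes]
    show IsLiePolynomial ((algebraMap ℚ (Module.End ℚ A) r) Q)
    rw [Module.algebraMap_end_apply]
    exact (LieSubalgebra.lieSpan ℚ A _).smul_mem r hQ
  | grade1 x =>
    rw [rho_ι]
    exact LieSubalgebra.lie_mem _ (LieSubalgebra.subset_lieSpan ⟨x, rfl⟩) hQ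
  | mul p q ihp ihq =>
    rw [map_mul, Module.End.mul_apply]
    exact ihp (ihq hQ)
  | add p q ihp ihq =>
    rw [map_add, LinearMap.add_apply]
    exact (LieSubalgebra.lieSpan ℚ A _).add_mem (ihp hQ) (ihq hQ)

/-! ### rho and homogeneity -/

lemma rho_basis_homog (l : List X) {q : ℕ} {Q : A} (hQ : IsHomogeneous q Q) :
    IsHomogeneous (l.length + q) (rho (BB (FreeMonoid.ofList l)) Q) := by
  induction l with
  | nil =>
    have h1 : (BB (FreeMonoid.ofList ([] : List X))) = (1 : A) := by
      rw [show (FreeMonoid.ofList ([] : List X)) = 1 from rfl]; exact basis_one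
    rw [h1, map_one, Module.End.one_apply]
    simpa using hQ
  | cons x t ih =>
    have h1 : (FreeMonoid.ofList (x :: t)) = FreeMonoid.of x * FreeMonoid.ofList t := rfl
    rw [h1, ← basis_mul, ← ι_eq_basis, map_mul, Module.End.mul_apply, rho_ι]
    have := homog_lie (homog_ι x) ih
    rw [show (1 + (t.length + q)) = (x :: t).length + q by simp; omega] at this
    exact this

lemma rho_homog {p q : ℕ} {P Q : A} (hP : IsHomogeneous p P) (hQ : IsHomogeneous q Q) :
    IsHomogeneous (p + q) (rho P Q) := by
  rw [isHomogeneous_iff] at hP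
  induction hP using Submodule.span_induction with
  | mem u hu =>
    obtain ⟨w, hw, rfl⟩ := hu
    have := rho_basis_homog (X := X) w.toList hQ
    rw [hw] at this
    simpa using this
  | zero => rw [map_zero]; exact homog_zero _
  | add p₁ p₂ _ _ ih1 ih2 => rw [map_add, LinearMap.add_apply]; exact homog_add ih1 ih2
  | smul c u _ ih => rw [map_smul, LinearMap.smul_apply]; exact homog_smul ih

/-! ### rmap lemmas -/

lemma rmap_basis (w : FreeMonoid X) : rmap X (BB w) = rword w.toList :=
  Module.Basis.constr_basis _ _ _ _

lemma rmap_ι (x : X) : rmap X (ιQ x) = ιQ x := by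
  rw [ι_eq_basis, rmap_basis, FreeMonoid.toList_of, show rword [x] = ιQ x from rfl]
  exact ι_eq_basis x

lemma rword_cons (x : X) (l : List X) (hl : l ≠ []) :
    rword (x :: l) = ⁅ιQ x, rword l⁆ := by
  cases l with
  | nil => exact absurd rfl hl
  | cons y t => rfl

lemma rword_homog (l : List X) : IsHomogeneous l.length (rword (l : List X)) := by
  induction l with
  | nil => exact homog_zero _
  | cons x t ih =>
    cases t with
    | nil => exact homog_ι x
    | cons y s =>
      rw [rword_cons x (y :: s) (by simp)]
      have := homog_lie (homog_ι x) ih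
      rw [show (1 + (y :: s).length) = (x :: y :: s).length by simp; omega] at this
      exact this

lemma rword_lieMon (l : List X) (hl : l ≠ []) : IsLieMon (rword l : A) := by
  induction l with
  | nil => exact absurd rfl hl
  | cons x t ih =>
    cases t with
    | nil => exact IsLieMon.unit x
    | cons y s =>
      rw [rword_cons x (y :: s) (by simp)]
      exact IsLieMon.br (IsLieMon.unit x) (ih (by simp))

lemma rmap_isLiePoly (P : A) : IsLiePolynomial (rmap X P) := by
  have : ∀ Q ∈ Submodule.span ℚ (Set.range (BB : FreeMonoid X → A)),
      IsLiePolynomial (rmap X Q) := by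
    intro Q hQ
    induction hQ using Submodule.span_induction with
    | mem q hq =>
      obtain ⟨u, rfl⟩ := hq
      rw [rmap_basis]
      rcases eq_or_ne u.toList []  with h | h
      · rw [h]; show IsLiePolynomial 0; exact (LieSubalgebra.lieSpan ℚ A _).zero_mem
      · exact lieMon_mem_lieSpan (rword_lieMon _ h)
    | zero => rw [map_zero]; exact (LieSubalgebra.lieSpan ℚ A _).zero_mem
    | add q₁ q₂ _ _ ih1 ih2 => rw [map_add]; exact (LieSubalgebra.lieSpan ℚ A _).add_mem ih1 ih2
    | smul c q _ ih => rw [map_smul]; exact (LieSubalgebra.lieSpan ℚ A _).smul_mem c ih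
  exact this P (by rw [Module.Basis.span_eq]; trivial)

lemma rmap_homog {n : ℕ} {P : A} (h : IsHomogeneous n P) : IsHomogeneous n (rmap X P) := by
  rw [isHomogeneous_iff] at h
  induction h using Submodule.span_induction with
  | mem q hq =>
    obtain ⟨u, hu, rfl⟩ := hq
    rw [rmap_basis, ← hu]
    exact rword_homog u.toList
  | zero => rw [map_zero]; exact homog_zero _
  | add q₁ q₂ _ _ ih1 ih2 => rw [map_add]; exact homog_add ih1 ih2
  | smul c q _ ih => rw [map_smul]; exact homog_smul ih

lemma rword_append (u v : List X) (hv : v ≠ []) :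
    rword ((u ++ v : List X)) = rho (BB (FreeMonoid.ofList u)) (rword v) := by
  induction u with
  | nil =>
    rw [List.nil_append, show (FreeMonoid.ofList ([] : List X)) = 1 from rfl, basis_one,
      map_one, Module.End.one_apply]
  | cons x t ih =>
    have happ : (x :: t) ++ v = x :: (t ++ v) := rfl
    rw [happ, rword_cons x (t ++ v) (by simp [hv]),
      show (FreeMonoid.ofList (x :: t)) = FreeMonoid.of x * FreeMonoid.ofList t from rfl,
      ← basis_mul, ← ι_eq_basis, map_mul, Module.End.mul_apply, rho_ι, ih]

/-- the span of nonempty words -/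
def NN : Submodule ℚ (FreeAlgebra ℚ X) :=
  Submodule.span ℚ (Set.range (BB : FreeMonoid X → A) \ {(1 : A)})

lemma homog_mem_NN {n : ℕ} {P : A} (hn : 0 < n) (h : IsHomogeneous n P) : P ∈ (NN : Submodule ℚ A) := by
  rw [isHomogeneous_iff] at h
  refine Submodule.span_mono ?_ h
  rintro _ ⟨w, hw, rfl⟩
  refine ⟨⟨w, rfl⟩, ?_⟩
  simp only [Set.mem_singleton_iff]
  intro h1
  have h2 : BB w = BB (1 : FreeMonoid X) := by rw [h1, basis_one]
  have := (FreeAlgebra.basisFreeMonoid ℚ X).injective h2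
  rw [this] at hw
  simp [Set.mem_setOf_eq] at hw
  replace hw : (0:ℕ) = n := by simpa using hw
  omega

lemma ι_mem_NN (x : X) : (ιQ x : A) ∈ (NN : Submodule ℚ A) := homog_mem_NN (by omega) (homog_ι x)

lemma rmap_mul (P : A) {Q : A} (hQ : Q ∈ (NN : Submodule ℚ A)) :
    rmap X (P * Q) = rho P (rmap X Q) := by
  induction hQ using Submodule.span_induction with
  | mem q hq =>
    obtain ⟨⟨w, rfl⟩, hw1⟩ := hq
    have hwnil : w.toList ≠ [] := by
      intro h
      apply hw1
      have : w = (1 : FreeMonoid X) := FreeMonoid.toList.injective h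
      rw [this, basis_one]
      rfl
    have key : ∀ R ∈ Submodule.span ℚ (Set.range (BB : FreeMonoid X → A)),
        rmap X (R * BB w) = rho R (rmap X (BB w)) := by
      intro R hR
      induction hR using Submodule.span_induction with
      | mem r hr =>
        obtain ⟨u, rfl⟩ := hr
        rw [basis_mul, rmap_basis, rmap_basis,
          show (u * w).toList = u.toList ++ w.toList from rfl,
          rword_append u.toList w.toList hwnil]
        congr 1
      | zero => rw [zero_mul, map_zero, map_zero, LinearMap.zero_apply]
      | add r₁ r₂ _ _ ih1 ih2 =>
        rw [add_mul, map_add, map_add, ih1, ih2, LinearMap.add_apply]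
      | smul c r _ ih =>
        rw [smul_mul_assoc, map_smul, map_smul, ih, LinearMap.smul_apply]
    exact key P (by rw [Module.Basis.span_eq]; trivial)
  | zero => simp
  | add q₁ q₂ _ _ ih1 ih2 => rw [mul_add, map_add, ih1, ih2, map_add]; simp
  | smul c q _ ih => rw [mul_smul_comm, map_smul, ih, map_smul]; simp

/-! ### Dynkin–Specht–Wever -/

lemma lieMon_spec {P : A} (h : IsLieMon P) :
    ∃ d : ℕ, 0 < d ∧ IsHomogeneous d P ∧ rmap X P = (d : ℚ) • P ∧ IsLiePolynomial P := by
  induction h with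
  | unit x =>
    exact ⟨1, by omega, homog_ι x, by rw [rmap_ι]; simp,
      LieSubalgebra.subset_lieSpan ⟨x, rfl⟩⟩
  | @br p q hp hq ihp ihq =>
    obtain ⟨dp, hdp, hph, hpr, hpL⟩ := ihp
    obtain ⟨dq, hdq, hqh, hqr, hqL⟩ := ihq
    refine ⟨dp + dq, by omega, homog_lie hph hqh, ?_, LieSubalgebra.lie_mem _ hpL hqL⟩
    rw [Ring.lie_def, map_sub, rmap_mul p (homog_mem_NN hdq hqh),
      rmap_mul q (homog_mem_NN hdp hph), hpr, hqr, map_smul, map_smul,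
      rho_eq_ad hpL, rho_eq_ad hqL, ← lie_skew q p]
    rw [Ring.lie_def]
    push_cast
    module

lemma proj_lie {Q : A} (hQ : IsLiePolynomial Q) (m : ℕ) :
    IsLiePolynomial (proj m Q) ∧ rmap X (proj m Q) = (m : ℚ) • proj m Q := by
  rw [isLiePoly_iff_span] at hQ
  induction hQ using Submodule.span_induction with
  | mem p hp =>
    obtain ⟨d, hd, hh, hr, hL⟩ := lieMon_spec hp
    rcases eq_or_ne m d with rfl | hmd
    · rw [proj_of_homog hh]
      exact ⟨hL, hr⟩
    · rw [proj_of_homog_ne hh hmd]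
      exact ⟨(LieSubalgebra.lieSpan ℚ A _).zero_mem, by simp⟩
  | zero =>
    rw [map_zero]
    exact ⟨(LieSubalgebra.lieSpan ℚ A _).zero_mem, by simp⟩
  | add q₁ q₂ _ _ ih1 ih2 =>
    rw [map_add]
    exact ⟨(LieSubalgebra.lieSpan ℚ A _).add_mem ih1.1 ih2.1,
      by rw [map_add, ih1.2, ih2.2, smul_add]⟩
  | smul c q _ ih =>
    rw [map_smul]
    exact ⟨(LieSubalgebra.lieSpan ℚ A _).smul_mem c ih.1,
      by rw [map_smul, ih.2, smul_comm]⟩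

/-! ### coefficients on powers of a letter -/

section Letter

variable (a : X)

lemma mul_eq_apow {u v : FreeMonoid X} {k : ℕ}
    (h : u * v = FreeMonoid.ofList (List.replicate k a)) :
    v * u = FreeMonoid.ofList (List.replicate k a) := by
  apply FreeMonoid.toList.injective
  have h' := congrArg FreeMonoid.toList h
  simp only [FreeMonoid.toList_mul, FreeMonoid.toList_ofList] at h' ⊢
  rw [List.eq_replicate_iff] at h' ⊢
  obtain ⟨hlen, hmem⟩ := h'
  refine ⟨by simp at hlen ⊢; omega, fun b hb => hmem b ?_⟩
  simp only [List.mem_append] at hb ⊢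
  tauto

lemma coeff_apow_mul (P Q : A) (k : ℕ) :
    coeffWord (P * Q) (FreeMonoid.ofList (List.replicate k a))
      = coeffWord (Q * P) (FreeMonoid.ofList (List.replicate k a)) := by
  have main : ∀ R ∈ Submodule.span ℚ (Set.range (BB : FreeMonoid X → A)),
      ∀ S ∈ Submodule.span ℚ (Set.range (BB : FreeMonoid X → A)),
      coeffWord (R * S) (FreeMonoid.ofList (List.replicate k a))
        = coeffWord (S * R) (FreeMonoid.ofList (List.replicate k a)) := by
    intro R hR
    induction hR using Submodule.span_induction with
    | mem r hr =>
      intro S hS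
      induction hS using Submodule.span_induction with
      | mem s hs =>
        obtain ⟨u, rfl⟩ := hr
        obtain ⟨v, rfl⟩ := hs
        rw [basis_mul, basis_mul, coeffWord_basis, coeffWord_basis]
        by_cases h : u * v = FreeMonoid.ofList (List.replicate k a)
        · rw [if_pos h, if_pos (mul_eq_apow a h)]
        · rw [if_neg h, if_neg (fun h' => h (mul_eq_apow a h'))]
      | zero => rw [mul_zero, zero_mul]
      | add s₁ s₂ _ _ ih1 ih2 =>
        rw [mul_add, add_mul, coeffWord_add, coeffWord_add, ih1, ih2]
      | smul c s _ ih =>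
        rw [mul_smul_comm, smul_mul_assoc, coeffWord_smul, coeffWord_smul, ih]
    | zero => intro S _; rw [mul_zero, zero_mul]
    | add r₁ r₂ _ _ ih1 ih2 =>
      intro S hS
      rw [mul_add, add_mul, coeffWord_add, coeffWord_add, ih1 S hS, ih2 S hS]
    | smul c r _ ih =>
      intro S hS
      rw [mul_smul_comm, smul_mul_assoc, coeffWord_smul, coeffWord_smul, ih S hS]
  exact main P (by rw [Module.Basis.span_eq]; trivial) Q (by rw [Module.Basis.span_eq]; trivial)

lemma coeff_apow_lie_bracket (P Q : A) (k : ℕ) :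
    coeffWord ⁅P, Q⁆ (FreeMonoid.ofList (List.replicate k a)) = 0 := by
  rw [Ring.lie_def, coeffWord_sub, coeff_apow_mul, sub_self]

/-- Lie polynomials have vanishing coefficients on `a^k` for `k ≠ 1`. -/
lemma coeff_apow_lie {Q : A} (hQ : IsLiePolynomial Q) {k : ℕ} (hk : k ≠ 1) :
    coeffWord Q (FreeMonoid.ofList (List.replicate k a)) = 0 := by
  let V : Submodule ℚ A :=
    { carrier := {P : A | ∀ m : ℕ, m ≠ 1 → coeffWord P (FreeMonoid.ofList (List.replicate m a)) = 0}
      add_mem' := fun h1 h2 m hm => by rw [coeffWord_add, h1 m hm, h2 m hm, add_zero]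
      zero_mem' := fun m _ => coeffWord_zero _
      smul_mem' := fun c P h m hm => by rw [coeffWord_smul, h m hm, mul_zero] }
  let S : LieSubalgebra ℚ A :=
    { toSubmodule := V
      lie_mem' := fun {P R} _ _ m _ => coeff_apow_lie_bracket a P R m }
  have hle : LieSubalgebra.lieSpan ℚ A (Set.range (ιQ)) ≤ S := by
    apply LieSubalgebra.lieSpan_le.mpr
    rintro _ ⟨x, rfl⟩
    intro m hm
    rw [ι_eq_basis, coeffWord_basis]
    rw [if_neg]
    intro h
    have := congrArg (fun w : FreeMonoid X => w.toList.length) h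
    simp at this
    omega
  exact hle hQ k hk

/-! ### the centralizer argument -/

lemma repr_ι_mul (P : A) :
    (FreeAlgebra.basisFreeMonoid ℚ X).repr (ιQ a * P)
      = Finsupp.mapDomain (fun u => FreeMonoid.of a * u)
          ((FreeAlgebra.basisFreeMonoid ℚ X).repr P) := by
  have : ∀ Q ∈ Submodule.span ℚ (Set.range (BB : FreeMonoid X → A)),
      (FreeAlgebra.basisFreeMonoid ℚ X).repr (ιQ a * Q)
        = Finsupp.mapDomain (fun u => FreeMonoid.of a * u)
            ((FreeAlgebra.basisFreeMonoid ℚ X).repr Q) := by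
    intro Q hQ
    induction hQ using Submodule.span_induction with
    | mem q hq =>
      obtain ⟨w, rfl⟩ := hq
      rw [ι_eq_basis, basis_mul, Module.Basis.repr_self, Module.Basis.repr_self, Finsupp.mapDomain_single]
    | zero => simp
    | add q₁ q₂ _ _ ih1 ih2 => rw [mul_add, map_add, ih1, ih2, map_add, Finsupp.mapDomain_add]
    | smul c q _ ih => rw [mul_smul_comm, map_smul, ih, map_smul, Finsupp.mapDomain_smul]
  exact this P (by rw [Module.Basis.span_eq]; trivial)

lemma repr_mul_ι (P : A) :
    (FreeAlgebra.basisFreeMonoid ℚ X).repr (P * ιQ a)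
      = Finsupp.mapDomain (fun u => u * FreeMonoid.of a)
          ((FreeAlgebra.basisFreeMonoid ℚ X).repr P) := by
  have : ∀ Q ∈ Submodule.span ℚ (Set.range (BB : FreeMonoid X → A)),
      (FreeAlgebra.basisFreeMonoid ℚ X).repr (Q * ιQ a)
        = Finsupp.mapDomain (fun u => u * FreeMonoid.of a)
            ((FreeAlgebra.basisFreeMonoid ℚ X).repr Q) := by
    intro Q hQ
    induction hQ using Submodule.span_induction with
    | mem q hq =>
      obtain ⟨w, rfl⟩ := hq
      rw [ι_eq_basis, basis_mul, Module.Basis.repr_self, Module.Basis.repr_self, Finsupp.mapDomain_single]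
    | zero => simp
    | add q₁ q₂ _ _ ih1 ih2 => rw [add_mul, map_add, ih1, ih2, map_add, Finsupp.mapDomain_add]
    | smul c q _ ih => rw [smul_mul_assoc, map_smul, ih, map_smul, Finsupp.mapDomain_smul]
  exact this P (by rw [Module.Basis.span_eq]; trivial)

lemma list_shape (l : List X) :
    (∃ k : ℕ, l = List.replicate k a) ∨
      ∃ (j : ℕ) (x : X) (v : List X), x ≠ a ∧ l = List.replicate j a ++ x :: v := by
  induction l with
  | nil => exact Or.inl ⟨0, rfl⟩
  | cons y t ih =>
    by_cases hy : y = a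
    · subst hy
      rcases ih with ⟨k, rfl⟩ | ⟨j, x, v, hx, rfl⟩
      · exact Or.inl ⟨k + 1, by rw [List.replicate_succ]⟩
      · exact Or.inr ⟨j + 1, x, v, hx, by rw [List.replicate_succ]; rfl⟩
    · exact Or.inr ⟨0, y, t, hy, rfl⟩

lemma centralizer_coeff {Q : A} (hQ : ⁅ιQ a, Q⁆ = 0) {w : FreeMonoid X}
    (hw : ∀ k : ℕ, w ≠ FreeMonoid.ofList (List.replicate k a)) : coeffWord Q w = 0 := by
  have hQ' : ιQ a * Q = Q * ιQ a := by
    rw [Ring.lie_def, sub_eq_zero] at hQ; exact hQ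
  have heq : Finsupp.mapDomain (fun u => FreeMonoid.of a * u)
        ((FreeAlgebra.basisFreeMonoid ℚ X).repr Q)
      = Finsupp.mapDomain (fun u => u * FreeMonoid.of a)
          ((FreeAlgebra.basisFreeMonoid ℚ X).repr Q) := by
    rw [← repr_ι_mul, ← repr_mul_ι, hQ']
  have key : ∀ (j : ℕ) (x : X) (v : List X), x ≠ a →
      (FreeAlgebra.basisFreeMonoid ℚ X).repr Q
        (FreeMonoid.ofList (List.replicate j a ++ x :: v)) = 0 := by
    intro j
    induction j with
    | zero =>
      intro x v hx
      have h1 := DFunLike.congr_fun heq (FreeMonoid.ofList (x :: v) * FreeMonoid.of a)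
      rw [Finsupp.mapDomain_notin_range _ _ ?_,
        Finsupp.mapDomain_apply (mul_left_injective (FreeMonoid.of a)) _ _] at h1
      · simpa using h1.symm
      · rintro ⟨u, hu⟩
        have := congrArg FreeMonoid.toList hu
        simp only [FreeMonoid.toList_mul, FreeMonoid.toList_ofList, FreeMonoid.toList_of] at this
        rw [List.cons_append] at this
        exact hx (List.head_eq_of_cons_eq this.symm ▸ rfl)
    | succ j ih =>
      intro x v hx
      have h1 := DFunLike.congr_fun heq
        (FreeMonoid.ofList (List.replicate (j+1) a ++ x :: v) * FreeMonoid.of a)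
      have hform : FreeMonoid.ofList (List.replicate (j+1) a ++ x :: v) * FreeMonoid.of a
          = FreeMonoid.of a * FreeMonoid.ofList (List.replicate j a ++ x :: (v ++ [a])) := by
        apply FreeMonoid.toList.injective
        simp [List.replicate_succ]
      rw [hform, Finsupp.mapDomain_apply (mul_right_injective (FreeMonoid.of a)) _ _,
        ← hform, Finsupp.mapDomain_apply (mul_left_injective (FreeMonoid.of a)) _ _,
        ih x (v ++ [a]) hx] at h1
      exact h1.symm
  rcases list_shape a w.toList with ⟨k, hk⟩ | ⟨j, x, v, hx, hl⟩
  · exact absurd (FreeMonoid.toList.injective (by simpa using hk)) (hw k)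
  · have : w = FreeMonoid.ofList (List.replicate j a ++ x :: v) :=
      FreeMonoid.toList.injective (by simpa using hl)
    rw [coeffWord, this]
    exact key j x v hx

/-! ### the homogeneous case of the main theorem -/

lemma homog_case :
    ∀ (n : ℕ) (P : A), IsHomogeneous n P →
      coeffWord P (FreeMonoid.ofList (List.replicate n a)) = 0 →
      IsLiePolynomial ⁅ιQ a, P⁆ → IsLiePolynomial P := by
  rintro (_ | _ | m) P hh hc hL
  · -- degree 0
    rw [isHomogeneous_iff] at hh
    have hset : (BB '' {w : FreeMonoid X | w.toList.length = 0}) = {(1 : A)} := by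
      ext z
      constructor
      · rintro ⟨w, hw, rfl⟩
        have : w = 1 := FreeMonoid.toList.injective (List.length_eq_zero_iff.mp hw)
        rw [this, basis_one]; rfl
      · rintro rfl
        exact ⟨1, by simp, basis_one⟩
    rw [hset] at hh
    obtain ⟨c, rfl⟩ := Submodule.mem_span_singleton.mp hh
    have hc0 : c = 0 := by
      have h1 : coeffWord ((1 : A)) (FreeMonoid.ofList (List.replicate 0 a)) = 1 := by
        have he : FreeMonoid.ofList (List.replicate 0 a) = 1 := rfl
        rw [he, ← basis_one, coeffWord_basis, if_pos rfl]
      rw [coeffWord_smul, h1, mul_one] at hc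
      exact hc
    rw [hc0, zero_smul]
    exact (LieSubalgebra.lieSpan ℚ A _).zero_mem
  · -- degree 1
    have hle : Submodule.span ℚ
        ((fun w : List X => (w.map ιQ).prod) '' {w : List X | w.length = 1})
        ≤ (LieSubalgebra.lieSpan ℚ A (Set.range (ιQ))).toSubmodule := by
      apply Submodule.span_le.mpr
      rintro _ ⟨l, hl, rfl⟩
      obtain ⟨x, rfl⟩ := List.length_eq_one_iff.mp hl
      simp only [List.map_cons, List.map_nil, List.prod_cons, List.prod_nil, mul_one]
      exact LieSubalgebra.subset_lieSpan ⟨x, rfl⟩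
    exact hle hh
  · -- degree m + 2
    set S : A := ⁅ιQ a, P⁆ with hS
    have hShom : IsHomogeneous (m + 3) S := by
      have := homog_lie (homog_ι a) hh
      rw [show 1 + (m + 1 + 1) = m + 3 by omega] at this
      exact this
    have hrS : rmap X S = ((m + 3 : ℕ) : ℚ) • S := by
      have h2 := (proj_lie hL (m + 3)).2
      rw [proj_of_homog hShom] at h2
      exact h2
    have hPNN : P ∈ (NN : Submodule ℚ A) := homog_mem_NN (by omega) hh
    have hexp : rmap X S = ⁅ιQ a, rmap X P⁆ - rho P (ιQ a) := by
      rw [hS, Ring.lie_def, map_sub, rmap_mul (ιQ a) hPNN, rmap_mul P (ι_mem_NN a),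
        rmap_ι, rho_ι]
    set W : A := rho P (ιQ a) + S with hW
    have hWlie : ⁅ιQ a, W⁆ = 0 := by
      have h3 : rho S (ιQ a) = ⁅S, ιQ a⁆ := rho_eq_ad hL _
      have h4 : rho S (ιQ a) = ⁅ιQ a, rho P (ιQ a)⁆ := by
        rw [hS, Ring.lie_def, map_sub, LinearMap.sub_apply, map_mul, map_mul,
          Module.End.mul_apply, Module.End.mul_apply, rho_ι a (rho P (ιQ a)),
          rho_ι a (ιQ a), lie_self, map_zero, sub_zero]
      have h5 : ⁅ιQ a, rho P (ιQ a)⁆ = ⁅S, ιQ a⁆ := h4.symm.trans h3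
      have h6 : ⁅S, ιQ a⁆ = -⁅ιQ a, S⁆ := (lie_skew _ _).symm
      rw [hW, lie_add, h5, h6, neg_add_cancel]
    have hWL : IsLiePolynomial W :=
      (LieSubalgebra.lieSpan ℚ A _).add_mem
        (rho_preserves P (LieSubalgebra.subset_lieSpan ⟨a, rfl⟩)) hL
    have hWhom : IsHomogeneous (m + 3) W := by
      refine homog_add ?_ hShom
      have := rho_homog hh (homog_ι a)
      rw [show (m + 1 + 1) + 1 = m + 3 by omega] at this
      exact this
    have hW0 : W = 0 := by
      apply eq_of_coeffWord_eq
      intro w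
      rw [coeffWord_zero]
      by_cases hwa : ∃ k : ℕ, w = FreeMonoid.ofList (List.replicate k a)
      · obtain ⟨k, rfl⟩ := hwa
        rcases eq_or_ne k 1 with rfl | hk
        · refine coeffWord_eq_zero_of_homog hWhom ?_
          simp only [FreeMonoid.toList_ofList, List.length_replicate]
          omega
        · exact coeff_apow_lie a hWL hk
      · push_neg at hwa
        exact centralizer_coeff a hWlie hwa
    have hrhoPa : rho P (ιQ a) = -S := by
      rw [hW] at hW0
      exact eq_neg_of_add_eq_zero_left hW0
    have h7 : ⁅ιQ a, rmap X P - ((m + 1 + 1 : ℕ) : ℚ) • P⁆ = 0 := by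
      have he := hexp
      rw [hrS, hrhoPa, sub_neg_eq_add] at he
      have h8 : ⁅ιQ a, rmap X P⁆ = ((m + 1 + 1 : ℕ) : ℚ) • S := by
        have h9 : ((m + 3 : ℕ) : ℚ) • S - S = ((m + 1 + 1 : ℕ) : ℚ) • S := by
          push_cast
          module
        rw [← h9, he]
        abel
      rw [lie_sub, lie_smul, h8, ← hS, sub_self]
    have hUhom : IsHomogeneous (m + 1 + 1) (rmap X P - ((m + 1 + 1 : ℕ) : ℚ) • P) :=
      homog_sub (rmap_homog hh) (homog_smul hh)
    have hU0 : rmap X P - ((m + 1 + 1 : ℕ) : ℚ) • P = 0 := by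
      apply eq_of_coeffWord_eq
      intro w
      rw [coeffWord_zero]
      by_cases hwa : ∃ k : ℕ, w = FreeMonoid.ofList (List.replicate k a)
      · obtain ⟨k, rfl⟩ := hwa
        rcases eq_or_ne k (m + 1 + 1) with rfl | hk
        · rw [coeffWord_sub, coeffWord_smul, hc,
            coeff_apow_lie a (rmap_isLiePoly P) (by omega), mul_zero, sub_zero]
        · refine coeffWord_eq_zero_of_homog hUhom ?_
          simp only [FreeMonoid.toList_ofList, List.length_replicate]
          omega
      · push_neg at hwa
        exact centralizer_coeff a h7 hwa
    have hfin : rmap X P = ((m + 1 + 1 : ℕ) : ℚ) • P := sub_eq_zero.mp hU0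
    have hPeq : P = (((m + 1 + 1 : ℕ) : ℚ))⁻¹ • rmap X P := by
      rw [hfin, smul_smul, inv_mul_cancel₀ (Nat.cast_ne_zero.mpr (by omega)), one_smul]
    rw [hPeq]
    exact (LieSubalgebra.lieSpan ℚ A _).smul_mem _ (rmap_isLiePoly P)

lemma stmt_aux (P : A)
    (hP : ∀ k : ℕ, coeffWord P (FreeMonoid.ofList (List.replicate k a)) = 0)
    (h : IsLiePolynomial ⁅ιQ a, P⁆) :
    IsLiePolynomial P := by
  obtain ⟨N, hdecomp⟩ := sum_proj P
  rw [hdecomp]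
  have key : ∀ n : ℕ, IsLiePolynomial (proj n P) := by
    intro n
    refine homog_case a n _ (proj_homog n P) ?_ ?_
    · rw [coeffWord_proj]
      split
      · exact hP n
      · rfl
    · rw [← proj_lie_bracket a n P]
      exact (proj_lie h (n + 1)).1
  exact sum_mem fun n _ => key n

end Letter

end StmtAux


/-- If the coefficient of `a^k` in `P` vanishes for every `k ≥ 0` and `[ι a, P]` is a Lie
polynomial, then `P` is a Lie polynomial. -/
theorem stmt_1 {X : Type*} (a : X) (P : FreeAlgebra ℚ X)
    (hP : ∀ k : ℕ, coeffWord P (FreeMonoid.ofList (List.replicate k a)) = 0)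
    (h : IsLiePolynomial ⁅FreeAlgebra.ι ℚ a, P⁆) :
    IsLiePolynomial P :=
  StmtAux.stmt_aux a P hP h
end

section
/- For all Lie polynomials P₁, P₂ ∈ ℚ⟨X⟩, the right-normed bracketing map r satisfies r([P₁, P₂]) = [P₁, r(P₂)] + [r(P₁), P₂]. -/
attribute [local instance 100] LieRing.ofAssociativeRing

namespace DSWaux

variable {X : Type*}

/-- The algebra hom `ℚ⟨X⟩ → End(ℚ⟨X⟩)` with `x ↦ ad (ι x)`. -/
noncomputable def phi (X : Type*) : FreeAlgebra ℚ X →ₐ[ℚ] Module.End ℚ (FreeAlgebra ℚ X) :=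
  FreeAlgebra.lift ℚ fun x => (LieAlgebra.ad ℚ (FreeAlgebra ℚ X) (FreeAlgebra.ι ℚ x) : _)

lemma basis_apply (w : FreeMonoid X) :
    FreeAlgebra.basisFreeMonoid ℚ X w = ((FreeMonoid.toList w).map (FreeAlgebra.ι ℚ)).prod := by
  rw [FreeAlgebra.basisFreeMonoid, Module.Basis.map_apply, Finsupp.coe_basisSingleOne]
  rw [← FreeMonoid.lift_apply]
  show FreeAlgebra.equivMonoidAlgebraFreeMonoid.symm (MonoidAlgebra.of ℚ (FreeMonoid X) w)
      = FreeMonoid.lift (FreeAlgebra.ι ℚ) w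
  induction w using FreeMonoid.recOn with
  | one => simp; exact MonoidAlgebra.one_def.symm
  | of_mul x y ih =>
    rw [map_mul, map_mul, map_mul, ih]
    congr 1
    simp [FreeAlgebra.equivMonoidAlgebraFreeMonoid]

lemma rmap_basis (w : FreeMonoid X) :
    rmap X (FreeAlgebra.basisFreeMonoid ℚ X w) = rword (FreeMonoid.toList w) :=
  Module.Basis.constr_basis _ _ _ _

lemma rword_cons (x : X) (l : List X) (h : l ≠ []) :
    rword (x :: l) = ⁅FreeAlgebra.ι ℚ x, rword l⁆ := by
  cases l with
  | nil => exact absurd rfl h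
  | cons y ys => rfl

lemma rword_append (a b : List X) (hb : b ≠ []) :
    rword (a ++ b) = phi X ((a.map (FreeAlgebra.ι ℚ)).prod) (rword b) := by
  induction a with
  | nil => simp
  | cons x a ih =>
    have hab : a ++ b ≠ [] := by simp [hb]
    rw [List.cons_append, rword_cons x _ hab, ih, List.map_cons, List.prod_cons, map_mul,
      Module.End.mul_apply]
    simp [phi, FreeAlgebra.lift_ι_apply, LieAlgebra.ad_apply]

lemma eps_word (l : List X) (h : l ≠ []) :
    FreeAlgebra.algebraMapInv ((l.map (FreeAlgebra.ι ℚ)).prod) = 0 := by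
  cases l with
  | nil => exact absurd rfl h
  | cons x xs =>
    rw [List.map_cons, List.prod_cons, map_mul]
    have : FreeAlgebra.algebraMapInv (FreeAlgebra.ι ℚ x) = (0 : ℚ) := by
      simp [FreeAlgebra.algebraMapInv]
    rw [this, zero_mul]

lemma key0 (u v : FreeMonoid X) :
    rmap X (FreeAlgebra.basisFreeMonoid ℚ X u * FreeAlgebra.basisFreeMonoid ℚ X v)
      = phi X (FreeAlgebra.basisFreeMonoid ℚ X u) (rmap X (FreeAlgebra.basisFreeMonoid ℚ X v))
        + FreeAlgebra.algebraMapInv (FreeAlgebra.basisFreeMonoid ℚ X v)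
          • rmap X (FreeAlgebra.basisFreeMonoid ℚ X u) := by
  have hmul : FreeAlgebra.basisFreeMonoid ℚ X u * FreeAlgebra.basisFreeMonoid ℚ X v
      = FreeAlgebra.basisFreeMonoid ℚ X (u * v) := by
    rw [basis_apply, basis_apply, basis_apply, FreeMonoid.toList_mul, List.map_append,
      List.prod_append]
  rw [hmul, rmap_basis, rmap_basis, rmap_basis, FreeMonoid.toList_mul]
  by_cases hv : FreeMonoid.toList v = []
  · have hv1 : FreeAlgebra.basisFreeMonoid ℚ X v = 1 := by
      rw [basis_apply, hv]; simp
    rw [hv1, hv, map_one]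
    simp [rword]
  · rw [rword_append _ _ hv, basis_apply v, eps_word _ hv, zero_smul, add_zero, basis_apply u]

lemma key (P Q : FreeAlgebra ℚ X) :
    rmap X (P * Q) = phi X P (rmap X Q) + FreeAlgebra.algebraMapInv Q • rmap X P := by
  have hmem : ∀ R : FreeAlgebra ℚ X,
      R ∈ Submodule.span ℚ (Set.range (FreeAlgebra.basisFreeMonoid ℚ X)) := fun R => by
    rw [Module.Basis.span_eq]; trivial
  induction hmem Q using Submodule.span_induction with
  | mem y hy =>
    obtain ⟨v, rfl⟩ := hy
    induction hmem P using Submodule.span_induction with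
    | mem z hz => obtain ⟨u, rfl⟩ := hz; exact key0 u v
    | zero => simp
    | add a b _ _ ha hb =>
      rw [add_mul, map_add, ha, hb, map_add, map_add, LinearMap.add_apply, smul_add]
      abel
    | smul c a _ ha =>
      rw [smul_mul_assoc, map_smul, ha, map_smul, map_smul, LinearMap.smul_apply, smul_add,
        smul_comm]
  | zero => simp
  | add a b _ _ ha hb =>
    rw [mul_add, map_add, ha, hb, map_add, map_add, map_add, add_smul]
    abel
  | smul c a _ ha =>
    rw [mul_smul_comm, map_smul, ha, map_smul, map_smul, map_smul, smul_add, smul_smul, smul_eq_mul]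

lemma phi_lie {P : FreeAlgebra ℚ X} (h : IsLiePolynomial P) (Q : FreeAlgebra ℚ X) :
    phi X P Q = ⁅P, Q⁆ := by
  revert Q
  refine LieSubalgebra.lieSpan_induction
    (p := fun P _ => ∀ Q, phi X P Q = ⁅P, Q⁆) (mem := ?_) (zero := ?_) (add := ?_) (smul := ?_) (lie := ?_) (hx := h)
  · rintro x ⟨a, rfl⟩ Q
    simp [phi, FreeAlgebra.lift_ι_apply, LieAlgebra.ad_apply]
  · intro Q; simp
  · intro a b _ _ ha hb Q
    rw [map_add, LinearMap.add_apply, ha, hb, add_lie]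
  · intro c a _ ha Q
    rw [map_smul, LinearMap.smul_apply, ha, smul_lie]
  · intro a b _ _ ha hb Q
    rw [Ring.lie_def a b, map_sub, map_mul, map_mul, LinearMap.sub_apply, Module.End.mul_apply,
      Module.End.mul_apply, ha, hb, ha, hb, ← Ring.lie_def, lie_lie]

lemma eps_lie {P : FreeAlgebra ℚ X} (h : IsLiePolynomial P) :
    FreeAlgebra.algebraMapInv P = 0 := by
  refine LieSubalgebra.lieSpan_induction
    (p := fun P _ => (FreeAlgebra.algebraMapInv P : ℚ) = 0) (mem := ?_) (zero := ?_) (add := ?_) (smul := ?_) (lie := ?_) (hx := h)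
  · rintro x ⟨a, rfl⟩; simp [FreeAlgebra.algebraMapInv]
  · simp
  · intro a b _ _ ha hb; rw [map_add, ha, hb, add_zero]
  · intro c a _ ha; rw [map_smul, ha, smul_zero]
  · intro a b _ _ ha hb; rw [Ring.lie_def, map_sub, map_mul, map_mul, mul_comm, sub_self]

end DSWaux

/-- For Lie polynomials `P₁, P₂`: `r([P₁,P₂]) = [P₁, r(P₂)] + [r(P₁), P₂]`. -/
theorem stmt_3 {X : Type*} (P₁ P₂ : FreeAlgebra ℚ X)
    (h₁ : IsLiePolynomial P₁) (h₂ : IsLiePolynomial P₂) :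
    rmap X ⁅P₁, P₂⁆ = ⁅P₁, rmap X P₂⁆ + ⁅rmap X P₁, P₂⁆ := by
  rw [Ring.lie_def, map_sub, DSWaux.key P₁ P₂, DSWaux.key P₂ P₁,
    DSWaux.eps_lie h₁, DSWaux.eps_lie h₂, zero_smul, zero_smul, add_zero, add_zero,
    DSWaux.phi_lie h₁, DSWaux.phi_lie h₂, ← lie_skew P₂ (rmap X P₁), sub_neg_eq_add]
end

section
/- If a ∈ X and P ∈ ℚ⟨X⟩ is a Lie polynomial, then r(P · ι a) = −[ι a, P]. -/
attribute [local instance 100] LieRing.ofAssociativeRing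

lemma basisFreeMonoid_apply' {X : Type*} (w : FreeMonoid X) :
    FreeAlgebra.basisFreeMonoid ℚ X w = (w.toList.map (FreeAlgebra.ι ℚ)).prod := by
  rw [FreeAlgebra.basisFreeMonoid, Module.Basis.map_apply]
  simp only [Finsupp.coe_basisSingleOne]
  show (FreeAlgebra.equivMonoidAlgebraFreeMonoid (R := ℚ) (X := X)).symm
      (MonoidAlgebra.single w (1 : ℚ)) = _
  rw [FreeAlgebra.equivMonoidAlgebraFreeMonoid]
  simp [AlgEquiv.ofAlgHom, MonoidAlgebra.lift_single, FreeMonoid.lift_apply]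

noncomputable def theta (X : Type*) :
    FreeAlgebra ℚ X →ₐ[ℚ] Module.End ℚ (FreeAlgebra ℚ X) :=
  FreeAlgebra.lift ℚ fun x =>
    (LieAlgebra.ad ℚ (FreeAlgebra ℚ X) (FreeAlgebra.ι ℚ x) : Module.End ℚ (FreeAlgebra ℚ X))

lemma rword_cons {X : Type*} (x y : X) (ys : List X) :
    rword (x :: y :: ys) = ⁅FreeAlgebra.ι ℚ x, rword (y :: ys)⁆ := rfl

lemma rword_append {X : Type*} (a : X) (l : List X) :
    rword (l ++ [a]) = theta X ((l.map (FreeAlgebra.ι ℚ)).prod) (FreeAlgebra.ι ℚ a) := by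
  induction l with
  | nil => simp [rword, theta]
  | cons x l ih =>
      obtain ⟨y, ys, h⟩ : ∃ y ys, l ++ [a] = y :: ys := by
        cases h : l ++ [a] with
        | nil => simpa using congrArg List.length h
        | cons y ys => exact ⟨y, ys, rfl⟩
      rw [List.cons_append, h, rword_cons, ← h, ih]
      simp [theta, FreeAlgebra.lift_ι_apply, mul_comm]

lemma rmap_mul_ι {X : Type*} (a : X) (Q : FreeAlgebra ℚ X) :
    rmap X (Q * FreeAlgebra.ι ℚ a) = theta X Q (FreeAlgebra.ι ℚ a) := by
  have : (rmap X).comp (LinearMap.mulRight ℚ (FreeAlgebra.ι ℚ a)) =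
      (LinearMap.applyₗ (FreeAlgebra.ι ℚ a)).comp (theta X).toLinearMap := by
    apply (FreeAlgebra.basisFreeMonoid ℚ X).ext
    intro w
    simp only [LinearMap.comp_apply, LinearMap.mulRight_apply, AlgHom.toLinearMap_apply]
    have hb : FreeAlgebra.basisFreeMonoid ℚ X w * FreeAlgebra.ι ℚ a =
        FreeAlgebra.basisFreeMonoid ℚ X (w * FreeMonoid.of a) := by
      rw [basisFreeMonoid_apply', basisFreeMonoid_apply']
      show _ = ((w.toList ++ [a]).map (FreeAlgebra.ι ℚ)).prod
      simp
    rw [hb, rmap, Module.Basis.constr_basis]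
    show rword (w.toList ++ [a]) = _
    rw [rword_append, basisFreeMonoid_apply']
    rfl
  exact DFunLike.congr_fun this Q

lemma theta_eq_ad {X : Type*} {P : FreeAlgebra ℚ X} (h : IsLiePolynomial P) :
    theta X P = LieAlgebra.ad ℚ (FreeAlgebra ℚ X) P := by
  refine LieSubalgebra.lieSpan_induction (R := ℚ)
    (p := fun Q _ => theta X Q = LieAlgebra.ad ℚ (FreeAlgebra ℚ X) Q) ?_ ?_ ?_ ?_ ?_ (hx := h)
  · rintro _ ⟨x, rfl⟩
    simp [theta, FreeAlgebra.lift_ι_apply]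
  · simp
  · intro x y _ _ hx hy; simp [hx, hy]
  · intro r x _ hx; simp [hx]
  · intro x y _ _ hx hy
    rw [LieHom.map_lie, ← hx, ← hy, Ring.lie_def, map_sub, map_mul, map_mul]
    rfl

/-- If `a ∈ X` and `P` is a Lie polynomial, then `r(P · ι a) = −[ι a, P]`. -/
theorem stmt_5 {X : Type*} (a : X) (P : FreeAlgebra ℚ X) (hLie : IsLiePolynomial P) :
    rmap X (P * FreeAlgebra.ι ℚ a) = -⁅FreeAlgebra.ι ℚ a, P⁆ := by
  rw [rmap_mul_ι, theta_eq_ad hLie, LieAlgebra.ad_apply, ← lie_skew]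
end

section
/- Let a ∈ X and let P₁, P₂ ∈ ℚ⟨X⟩ be two polynomials, each of whose coefficient of the word a^k is zero for every k ≥ 0. If [ι a, P₁] = [ι a, P₂], then P₁ = P₂ (uniqueness of solutions of bracket equations [ι a, ·] = Q among polynomials with no a-power terms). -/
attribute [local instance 100] LieRing.ofAssociativeRing

/-- Uniqueness of solutions of `[ι a, ·] = Q` among polynomials with no `a`-power terms. -/
theorem stmt_13 {X : Type*} (a : X) (P₁ P₂ : FreeAlgebra ℚ X)
    (h₁ : ∀ k : ℕ, coeffWord P₁ (FreeMonoid.ofList (List.replicate k a)) = 0)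
    (h₂ : ∀ k : ℕ, coeffWord P₂ (FreeMonoid.ofList (List.replicate k a)) = 0)
    (h : ⁅FreeAlgebra.ι ℚ a, P₁⁆ = ⁅FreeAlgebra.ι ℚ a, P₂⁆) :
    P₁ = P₂ := by
  set e := FreeAlgebra.equivMonoidAlgebraFreeMonoid (R := ℚ) (X := X) with he
  set f : MonoidAlgebra ℚ (FreeMonoid X) := e (P₁ - P₂) with hf
  set s : MonoidAlgebra ℚ (FreeMonoid X) := MonoidAlgebra.single (FreeMonoid.of a) 1 with hs
  have hcoeff : ∀ (P : FreeAlgebra ℚ X) (w : FreeMonoid X), coeffWord P w = (e P).coeff w := by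
    intro P w
    simp [coeffWord, FreeAlgebra.basisFreeMonoid, Module.Basis.map_repr, he]
  have hea : e (FreeAlgebra.ι ℚ a) = s := by
    simp [he, hs, FreeAlgebra.equivMonoidAlgebraFreeMonoid, MonoidAlgebra.of_apply]
  -- commutation
  have h' : FreeAlgebra.ι ℚ a * (P₁ - P₂) = (P₁ - P₂) * FreeAlgebra.ι ℚ a := by
    rw [Ring.lie_def, Ring.lie_def, sub_eq_sub_iff_sub_eq_sub] at h
    rw [mul_sub, sub_mul]
    exact h
  have hcomm : s * f = f * s := by
    have := congrArg e h'
    rwa [map_mul, map_mul, hea] at this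
  -- coefficient lemmas
  have lem1 : ∀ w : FreeMonoid X, (s * f).coeff (FreeMonoid.of a * w) = f.coeff w := by
    intro w
    rw [hs, MonoidAlgebra.coeff_single_mul_eq_mul_coeff (x := f) _ (fun u _ => mul_right_inj _), one_mul]
  have lem2 : ∀ w : FreeMonoid X, (f * s).coeff (w * FreeMonoid.of a) = f.coeff w := by
    intro w
    rw [hs, MonoidAlgebra.coeff_mul_single_eq_coeff_mul (x := f) _ (fun u _ => mul_left_inj _), mul_one]
  -- rotation
  have rot : ∀ w : FreeMonoid X, f.coeff (w * FreeMonoid.of a) = f.coeff (FreeMonoid.of a * w) := by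
    intro w
    calc f.coeff (w * FreeMonoid.of a) = (s * f).coeff (FreeMonoid.of a * (w * FreeMonoid.of a)) :=
          (lem1 _).symm
      _ = (f * s).coeff (FreeMonoid.of a * (w * FreeMonoid.of a)) := by rw [hcomm]
      _ = (f * s).coeff ((FreeMonoid.of a * w) * FreeMonoid.of a) := by rw [mul_assoc]
      _ = f.coeff (FreeMonoid.of a * w) := lem2 _
  -- vanish for words ending in a letter ≠ a
  have vanish : ∀ (l : List X) (x : X), x ≠ a → f.coeff (FreeMonoid.ofList (l ++ [x])) = 0 := by
    intro l x hx
    have h0 : f.coeff (FreeMonoid.ofList (l ++ [x])) =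
        (f * s).coeff (FreeMonoid.of a * FreeMonoid.ofList (l ++ [x])) := by
      rw [← lem1, hcomm]
    rw [h0, hs]
    apply MonoidAlgebra.mul_single_apply_of_not_exists_mul
    rintro ⟨d, hd⟩
    have : FreeMonoid.toList (FreeMonoid.of a * FreeMonoid.ofList (l ++ [x])) =
        FreeMonoid.toList (d * FreeMonoid.of a) := by rw [hd]
    rw [FreeMonoid.toList_mul, FreeMonoid.toList_mul, FreeMonoid.toList_of,
      FreeMonoid.toList_ofList] at this
    rw [← List.append_assoc] at this
    have h2 := congrArg List.getLast? this
    rw [List.getLast?_concat, List.getLast?_concat] at h2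
    exact hx (Option.some.inj h2)
  -- swap lemma
  have swap : ∀ (n : ℕ) (m : List X),
      f.coeff (FreeMonoid.ofList (m ++ List.replicate n a)) =
      f.coeff (FreeMonoid.ofList (List.replicate n a ++ m)) := by
    intro n
    induction n with
    | zero => intro m; simp
    | succ n ih =>
      intro m
      have e1 : m ++ List.replicate (n+1) a = (m ++ List.replicate n a) ++ [a] := by
        rw [(List.replicate_succ' : List.replicate (n+1) a = _), ← List.append_assoc]
      have e2 : (a :: m) ++ List.replicate n a = a :: (m ++ List.replicate n a) := rfl
      have e3 : List.replicate n a ++ (a :: m) = List.replicate (n+1) a ++ m := by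
        rw [(List.replicate_succ' : List.replicate (n+1) a = _), List.append_assoc]
        rfl
      calc f.coeff (FreeMonoid.ofList (m ++ List.replicate (n+1) a))
          = f.coeff (FreeMonoid.ofList (m ++ List.replicate n a) * FreeMonoid.of a) := by
            rw [e1, FreeMonoid.ofList_append, FreeMonoid.ofList_singleton]
        _ = f.coeff (FreeMonoid.of a * FreeMonoid.ofList (m ++ List.replicate n a)) := rot _
        _ = f.coeff (FreeMonoid.ofList ((a :: m) ++ List.replicate n a)) := by
            rw [e2, FreeMonoid.ofList_cons]
        _ = f.coeff (FreeMonoid.ofList (List.replicate n a ++ (a :: m))) := ih (a :: m)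
        _ = f.coeff (FreeMonoid.ofList (List.replicate (n+1) a ++ m)) := by rw [e3]
  -- power coefficients vanish
  have hpow : ∀ k : ℕ, f.coeff (FreeMonoid.ofList (List.replicate k a)) = 0 := by
    intro k
    have : f.coeff (FreeMonoid.ofList (List.replicate k a)) =
        coeffWord P₁ (FreeMonoid.ofList (List.replicate k a)) -
        coeffWord P₂ (FreeMonoid.ofList (List.replicate k a)) := by
      rw [hcoeff, hcoeff, hf, map_sub]
      rfl
    rw [this, h₁, h₂, sub_zero]
  -- decomposition of lists
  have decomp : ∀ l : List X, (∃ n, l = List.replicate n a) ∨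
      (∃ (n : ℕ) (m : List X) (x : X), x ≠ a ∧ l = (m ++ [x]) ++ List.replicate n a) := by
    intro l
    induction l using List.reverseRecOn with
    | nil => exact Or.inl ⟨0, rfl⟩
    | append_singleton l y ih =>
      by_cases hy : y = a
      · rcases ih with ⟨n, rfl⟩ | ⟨n, m, x, hx, rfl⟩
        · exact Or.inl ⟨n + 1, by rw [hy, (List.replicate_succ' : List.replicate (n+1) a = _)]⟩
        · refine Or.inr ⟨n + 1, m, x, hx, ?_⟩
          rw [hy, (List.replicate_succ' : List.replicate (n+1) a = _), List.append_assoc, List.append_assoc]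
      · exact Or.inr ⟨0, l, y, hy, by simp⟩
  -- all coefficients vanish
  have key : ∀ l : List X, f.coeff (FreeMonoid.ofList l) = 0 := by
    intro l
    rcases decomp l with ⟨n, rfl⟩ | ⟨n, m, x, hx, rfl⟩
    · exact hpow n
    · rw [swap n (m ++ [x]), ← List.append_assoc]
      exact vanish _ x hx
  have hf0 : f = 0 := by
    apply MonoidAlgebra.coeff_injective
    ext w
    exact key w
  have : P₁ - P₂ = 0 := by
    have := congrArg e.symm hf0
    rwa [AlgEquiv.symm_apply_apply, map_zero] at this
  exact sub_eq_zero.mp this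
end
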